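/- Let m ≥ 2 be an integer, p > 2, and let K ⊂ ℝ² be a compact set with |S(K)| = 0. Let f = {f^{(j)}}_{|j|≤m−1} be a jet of order m−1 on K with f^{(j)} = 0 for all 1 ≤ |j| ≤ m−1 and ‖M^{(m)}f‖_{L^p(ℝ²)} < ∞. For each ε > 0 choose finitely many disjoint open intervals covering f^{(0)}(K) with total length less than ε, let A_ε be their union, and define η_ε(t) := ∫_0^t 1_{A_ε}(s) ds. Define the jet f_ε by f_ε^{(0)} := η_ε ∘ f^{(0)} and f_ε^{(j)} := 0 for 1 ≤ |j| ≤ m−1. Then ‖M^{(m)}f_ε‖_{L^p(ℝ²)} ≤ δ(ε) for some function δ with δ(ε) → 0 as ε → 0⁺. -/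

import Mathlib

open MeasureTheory Filter Topology Metric Set
open scoped ENNReal NNReal Classical

noncomputable section

namespace DFA

abbrev Euc (n : ℕ) := EuclideanSpace ℝ (Fin n)
abbrev E2 := EuclideanSpace ℝ (Fin 2)

/-- The set `S(E)` of points of `E` that are limits of sequences of points of `E` lying in
connected components of `E` different from that of the limit point. -/
def singSet (E : Set E2) : Set E2 :=
  {x | x ∈ E ∧ ∃ xk : ℕ → E2, (∀ k, xk k ∈ E) ∧ Tendsto xk atTop (𝓝 x) ∧
    ∀ k, connectedComponentIn E (xk k) ≠ connectedComponentIn E x}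

/-- The finite set of multi-indices of order at most `m`. -/
def mIdx (n m : ℕ) : Finset (Fin n → ℕ) :=
  (Finset.Icc 0 (fun _ => m)).filter (fun j => (∑ i, j i) ≤ m)

/-- The `m`-th order Taylor polynomial of the jet `f` centred at `y`, evaluated at `x`. -/
def taylorPoly {n : ℕ} (m : ℕ) (f : (Fin n → ℕ) → Euc n → ℝ) (y x : Euc n) : ℝ :=
  ∑ j ∈ mIdx n m, (((∏ i, (j i).factorial : ℕ)) : ℝ)⁻¹ * f j y * ∏ i, (x i - y i) ^ j i

/-- The Taylor remainder `R_j f(x,y)` of order `m` of the jet `f`. -/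
def jetRem {n : ℕ} (m : ℕ) (f : (Fin n → ℕ) → Euc n → ℝ) (j : Fin n → ℕ)
    (x y : Euc n) : ℝ :=
  f j x - ∑ l ∈ (mIdx n m).filter (fun l => (∑ i, (j i + l i)) ≤ m),
    (((∏ i, (l i).factorial : ℕ)) : ℝ)⁻¹ * f (fun i => j i + l i) y * ∏ i, (x i - y i) ^ l i

/-- Shvartsman's maximal function `M^{(m)} f` of a jet of order `m-1` on `K`. -/
def shvMax {n : ℕ} (m : ℕ) (K : Set (Euc n)) (f : (Fin n → ℕ) → Euc n → ℝ)
    (x : Euc n) : ℝ≥0∞ :=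
  ⨆ (y : Euc n) (_ : y ∈ K) (z : Euc n) (_ : z ∈ K) (_ : y ≠ z),
    (‖taylorPoly (m - 1) f y x - taylorPoly (m - 1) f z x‖₊ : ℝ≥0∞) /
      (edist x y ^ (m : ℝ) + edist x z ^ (m : ℝ))

/-- The `L^p` norm of an `ℝ≥0∞`-valued function on `ℝⁿ`. -/
def lpNormE {n : ℕ} (g : Euc n → ℝ≥0∞) (p : ℝ) : ℝ≥0∞ :=
  (∫⁻ x, g x ^ p) ^ (1 / p)

/-- `A ⊆ ℝ` is the union of the finitely many pairwise disjoint open intervals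
`(a i, b i)`. -/
def IntervalFamily (N : ℕ) (a b : Fin N → ℝ) (A : Set ℝ) : Prop :=
  A = (⋃ i, Set.Ioo (a i) (b i)) ∧ (∀ i, a i < b i) ∧
    ∀ i i', i ≠ i' → Disjoint (Set.Ioo (a i) (b i)) (Set.Ioo (a i') (b i'))

/-- The monotone compression map `η_A(t) = ∫_0^t 1_A(s) ds`. -/
def etaComp (A : Set ℝ) (t : ℝ) : ℝ :=
  ∫ s in (0 : ℝ)..t, A.indicator (fun _ => (1 : ℝ)) s

section Chunk1

lemma pi_sum_eq_zero_iff {j : Fin 2 → ℕ} : (∑ i, j i) = 0 ↔ j = 0 := by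
  constructor
  · intro h
    funext i
    exact Finset.sum_eq_zero_iff.mp h i (Finset.mem_univ i)
  · rintro rfl; simp

lemma zero_mem_mIdx (n m : ℕ) : (0 : Fin n → ℕ) ∈ mIdx n m := by
  simp only [mIdx, Finset.mem_filter, Finset.mem_Icc]
  refine ⟨⟨le_rfl, fun i => Nat.zero_le _⟩, by simp⟩

lemma taylorPoly_eq (m' : ℕ) (g : (Fin 2 → ℕ) → Euc 2 → ℝ) (y x : Euc 2)
    (hg : ∀ j ∈ mIdx 2 m', j ≠ 0 → g j y = 0) :
    taylorPoly m' g y x = g 0 y := by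
  unfold taylorPoly
  rw [Finset.sum_eq_single_of_mem 0 (zero_mem_mIdx 2 m')]
  · simp [Nat.factorial]
  · intro j hj hj0
    rw [hg j hj hj0, mul_zero, zero_mul]

lemma hf_vanish {m : ℕ} {K : Set E2} {f : (Fin 2 → ℕ) → E2 → ℝ}
    (hf : ∀ j : Fin 2 → ℕ, 1 ≤ (∑ i, j i) → (∑ i, j i) ≤ m - 1 → ∀ x ∈ K, f j x = 0)
    {y : E2} (hy : y ∈ K) : ∀ j ∈ mIdx 2 (m - 1), j ≠ 0 → f j y = 0 := by
  intro j hj hj0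
  refine hf j ?_ ?_ y hy
  · exact Nat.one_le_iff_ne_zero.mpr (fun h => hj0 (pi_sum_eq_zero_iff.mp h))
  · exact (Finset.mem_filter.mp hj).2

lemma nn_taylor_orig {m : ℕ} {K : Set E2} {f : (Fin 2 → ℕ) → E2 → ℝ}
    (hf : ∀ j : Fin 2 → ℕ, 1 ≤ (∑ i, j i) → (∑ i, j i) ≤ m - 1 → ∀ x ∈ K, f j x = 0)
    {y z : E2} (hy : y ∈ K) (hz : z ∈ K) (x : E2) :
    (‖taylorPoly (m - 1) f y x - taylorPoly (m - 1) f z x‖₊ : ℝ≥0∞) =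
      ENNReal.ofReal |f 0 y - f 0 z| := by
  rw [taylorPoly_eq _ _ _ _ (hf_vanish hf hy), taylorPoly_eq _ _ _ _ (hf_vanish hf hz),
    ← enorm_eq_nnnorm, ← ofReal_norm, Real.norm_eq_abs]

lemma nn_taylor_eta {m : ℕ} (A : Set ℝ) (f0 : E2 → ℝ) (y z x : E2) :
    (‖taylorPoly (m - 1) (fun j x => if j = 0 then etaComp A (f0 x) else 0) y x -
        taylorPoly (m - 1) (fun j x => if j = 0 then etaComp A (f0 x) else 0) z x‖₊ : ℝ≥0∞) =
      ENNReal.ofReal |etaComp A (f0 y) - etaComp A (f0 z)| := by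
  rw [taylorPoly_eq _ _ _ _ (fun j _ hj0 => if_neg hj0),
    taylorPoly_eq _ _ _ _ (fun j _ hj0 => if_neg hj0),
    ← enorm_eq_nnnorm, ← ofReal_norm, Real.norm_eq_abs]
  simp

lemma le_shvMax (m : ℕ) (K : Set E2) (g : (Fin 2 → ℕ) → E2 → ℝ) {y z : E2} (x : E2)
    (hy : y ∈ K) (hz : z ∈ K) (hyz : y ≠ z) :
    (‖taylorPoly (m - 1) g y x - taylorPoly (m - 1) g z x‖₊ : ℝ≥0∞) /
      (edist x y ^ (m : ℝ) + edist x z ^ (m : ℝ)) ≤ shvMax m K g x :=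
  le_iSup_of_le y (le_iSup_of_le hy (le_iSup_of_le z (le_iSup_of_le hz
    (le_iSup_of_le hyz le_rfl))))

lemma shvMax_le {m : ℕ} {K : Set E2} {g : (Fin 2 → ℕ) → E2 → ℝ} {x : E2} {c : ℝ≥0∞}
    (h : ∀ y ∈ K, ∀ z ∈ K, y ≠ z →
      (‖taylorPoly (m - 1) g y x - taylorPoly (m - 1) g z x‖₊ : ℝ≥0∞) /
        (edist x y ^ (m : ℝ) + edist x z ^ (m : ℝ)) ≤ c) :
    shvMax m K g x ≤ c := by
  refine iSup_le fun y => iSup_le fun hy => iSup_le fun z => iSup_le fun hz =>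
    iSup_le fun hyz => h y hy z hz hyz

lemma den_pos {m : ℕ} (hm : 1 ≤ m) {y z : E2} (hyz : y ≠ z) (x : E2) :
    (edist x y ^ (m : ℝ) + edist x z ^ (m : ℝ)) ≠ 0 := by
  intro h
  rcases add_eq_zero.mp h with ⟨h1, h2⟩
  have hm' : (0:ℝ) < (m:ℝ) := by positivity
  rcases ENNReal.rpow_eq_zero_iff.mp h1 with ⟨e1, _⟩ | ⟨_, hlt⟩
  · rcases ENNReal.rpow_eq_zero_iff.mp h2 with ⟨e2, _⟩ | ⟨_, hlt⟩
    · exact hyz ((edist_eq_zero.mp e1).symm.trans (edist_eq_zero.mp e2))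
    · linarith
  · linarith

lemma den_ne_top {m : ℕ} (x y z : E2) :
    (edist x y ^ (m : ℝ) + edist x z ^ (m : ℝ)) ≠ ⊤ := by
  have h1 := ENNReal.rpow_lt_top_of_nonneg (by positivity : (0:ℝ) ≤ (m:ℝ)) (edist_ne_top x y)
  have h2 := ENNReal.rpow_lt_top_of_nonneg (by positivity : (0:ℝ) ≤ (m:ℝ)) (edist_ne_top x z)
  exact (ENNReal.add_lt_top.mpr ⟨h1, h2⟩).ne

end Chunk1
section Chunk2

lemma shvMax_eq_ofReal {m : ℕ} {K : Set E2} {f : (Fin 2 → ℕ) → E2 → ℝ}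
    (hf : ∀ j : Fin 2 → ℕ, 1 ≤ (∑ i, j i) → (∑ i, j i) ≤ m - 1 → ∀ x ∈ K, f j x = 0) :
    shvMax m K f = fun x => ⨆ (y : E2) (_ : y ∈ K) (z : E2) (_ : z ∈ K) (_ : y ≠ z),
      ENNReal.ofReal |f 0 y - f 0 z| / (edist x y ^ (m : ℝ) + edist x z ^ (m : ℝ)) := by
  funext x
  unfold shvMax
  refine iSup_congr fun y => iSup_congr fun hy => iSup_congr fun z => iSup_congr fun hz =>
    iSup_congr fun hyz => ?_
  rw [nn_taylor_orig hf hy hz]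

lemma lsc_term {m : ℕ} (c : ℝ≥0∞) (hc : c ≠ ⊤) (y z : E2) :
    LowerSemicontinuous fun x : E2 => c / (edist x y ^ (m : ℝ) + edist x z ^ (m : ℝ)) := by
  have hden : Continuous fun x : E2 => edist x y ^ (m : ℝ) + edist x z ^ (m : ℝ) := by
    have h1 : Continuous fun x : E2 => edist x y := continuous_id.edist continuous_const
    have h2 : Continuous fun x : E2 => edist x z := continuous_id.edist continuous_const
    exact (ENNReal.continuous_rpow_const.comp h1).add (ENNReal.continuous_rpow_const.comp h2)
  have : Continuous fun x : E2 => c / (edist x y ^ (m : ℝ) + edist x z ^ (m : ℝ)) := by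
    simp only [div_eq_mul_inv]
    exact (ENNReal.continuous_const_mul hc).comp (continuous_inv.comp hden)
  exact this.lowerSemicontinuous

lemma shvMax_measurable {m : ℕ} {K : Set E2} {f : (Fin 2 → ℕ) → E2 → ℝ}
    (hf : ∀ j : Fin 2 → ℕ, 1 ≤ (∑ i, j i) → (∑ i, j i) ≤ m - 1 → ∀ x ∈ K, f j x = 0) :
    Measurable (shvMax m K f) := by
  rw [shvMax_eq_ofReal hf]
  refine LowerSemicontinuous.measurable ?_
  refine lowerSemicontinuous_iSup fun y => lowerSemicontinuous_iSup fun hy =>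
    lowerSemicontinuous_iSup fun z => lowerSemicontinuous_iSup fun hz =>
    lowerSemicontinuous_iSup fun hyz => ?_
  exact lsc_term _ ENNReal.ofReal_ne_top y z

lemma lint_lt_top {m : ℕ} {K : Set E2} {f : (Fin 2 → ℕ) → E2 → ℝ} {p : ℝ} (hp : 0 < p)
    (hMf : lpNormE (shvMax m K f) p < ⊤) :
    ∫⁻ x, shvMax m K f x ^ p ≠ ⊤ := by
  intro h
  unfold lpNormE at hMf
  rw [h, ENNReal.top_rpow_of_pos (by positivity)] at hMf
  exact (lt_irrefl _ hMf)

end Chunk2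
section Chunk3

lemma eta_intInt (A : Set ℝ) (hA : MeasurableSet A) (a b : ℝ) :
    IntervalIntegrable (A.indicator (fun _ => (1:ℝ))) volume a b := by
  refine (intervalIntegrable_const (c := (1:ℝ))).mono_fun
    ((measurable_const.indicator hA).aestronglyMeasurable) ?_
  refine Filter.Eventually.of_forall fun u => ?_
  by_cases hu : u ∈ A <;> simp [Set.indicator_apply, hu, Real.norm_eq_abs]

lemma etaComp_sub (A : Set ℝ) (hA : MeasurableSet A) (s t : ℝ) :
    etaComp A t - etaComp A s = ∫ u in s..t, A.indicator (fun _ => (1:ℝ)) u := by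
  unfold etaComp
  rw [← intervalIntegral.integral_interval_sub_left (eta_intInt A hA 0 t) (eta_intInt A hA 0 s)]

lemma eta_lip (A : Set ℝ) (hA : MeasurableSet A) (s t : ℝ) :
    |etaComp A t - etaComp A s| ≤ |t - s| := by
  rw [etaComp_sub A hA s t, ← Real.norm_eq_abs]
  have := intervalIntegral.norm_integral_le_of_norm_le_const
    (f := A.indicator (fun _ => (1:ℝ))) (C := 1) (a := s) (b := t) ?_
  · simpa using this
  · intro u _
    by_cases hu : u ∈ A <;> simp [Set.indicator_apply, hu, Real.norm_eq_abs]

lemma eta_osc (A : Set ℝ) (hA : MeasurableSet A) (hfin : volume A ≠ ⊤) (s t : ℝ) :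
    |etaComp A t - etaComp A s| ≤ (volume A).toReal := by
  have key : ∀ u v : ℝ, u ≤ v → etaComp A v - etaComp A u ∈
      Set.Icc (0:ℝ) (volume A).toReal := by
    intro u v huv
    rw [etaComp_sub A hA u v, intervalIntegral.integral_of_le huv]
    constructor
    · refine MeasureTheory.integral_nonneg fun w => ?_
      by_cases hw : w ∈ A <;> simp [Set.indicator_apply, hw]
    · rw [MeasureTheory.setIntegral_indicator hA]
      have : ∫ w in Set.Ioc u v ∩ A, (1:ℝ) ∂volume
          = (volume (Set.Ioc u v ∩ A)).toReal := by
        rw [MeasureTheory.setIntegral_const]; simp [Measure.real]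
      rw [this]
      exact ENNReal.toReal_mono hfin (measure_mono Set.inter_subset_right)
  rcases le_total s t with h | h
  · have := key s t h
    rw [abs_of_nonneg this.1]
    exact this.2
  · have := key t s h
    rw [abs_sub_comm, abs_of_nonneg this.1]
    exact this.2

lemma volA_le {N : ℕ} {a b : Fin N → ℝ} {A : Set ℝ} (hfam : IntervalFamily N a b A) :
    volume A ≤ ENNReal.ofReal (∑ i, (b i - a i)) := by
  rcases hfam with ⟨hA, hab, -⟩
  rw [hA]
  refine (measure_iUnion_fintype_le _ _).trans ?_
  have : ∀ i, volume (Set.Ioo (a i) (b i)) = ENNReal.ofReal (b i - a i) := fun i =>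
    Real.volume_Ioo
  rw [Finset.sum_congr rfl (fun i _ => this i)]
  rw [← ENNReal.ofReal_sum_of_nonneg (fun i _ => le_of_lt (sub_pos.mpr (hab i)))]

end Chunk3
section Chunk4

lemma exists_le_avg {g : E2 → ℝ≥0∞} (hg : Measurable g) (hI : ∫⁻ x, g x ≠ ⊤)
    {B : Set E2} (hB : MeasurableSet B) (h0 : volume B ≠ 0) (hfin : volume B ≠ ⊤) :
    ∃ x ∈ B, g x ≤ 2 * (∫⁻ x, g x) / volume B := by
  rcases eq_or_ne (∫⁻ x, g x) 0 with hI0 | hI0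
  · have hnull : volume {y | ¬ g y = 0} = 0 := by
      have := (MeasureTheory.lintegral_eq_zero_iff hg).mp hI0
      simpa [Filter.EventuallyEq, MeasureTheory.ae_iff] using this
    obtain ⟨x, hxB, hx0⟩ : ∃ x ∈ B, g x = 0 := by
      by_contra hc
      push_neg at hc
      exact h0 (measure_mono_null (fun x hx => hc x hx) hnull)
    exact ⟨x, hxB, by simp [hx0]⟩
  · by_contra hcon
    push_neg at hcon
    set I := ∫⁻ x, g x with hIdef
    have hpt : ∀ x, B.indicator (fun _ => 2 * I / volume B) x ≤ g x := by
      intro x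
      by_cases hx : x ∈ B
      · rw [Set.indicator_of_mem hx]
        exact (hcon x hx).le
      · rw [Set.indicator_of_notMem hx]
        exact zero_le
    have hint : ∫⁻ x, B.indicator (fun _ => 2 * I / volume B) x ≤ ∫⁻ x, g x :=
      MeasureTheory.lintegral_mono hpt
    rw [MeasureTheory.lintegral_indicator hB, MeasureTheory.setLIntegral_const,
      ENNReal.div_mul_cancel h0 hfin] at hint
    have hlt : I < 2 * I := by
      rw [two_mul]
      have := ENNReal.lt_add_right hI hI0
      simpa using this
    exact absurd (lt_of_lt_of_le hlt hint) (lt_irrefl I)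

lemma num_le_mf {m : ℕ} (hm : 2 ≤ m) {K : Set E2} {f : (Fin 2 → ℕ) → E2 → ℝ}
    (hf : ∀ j : Fin 2 → ℕ, 1 ≤ (∑ i, j i) → (∑ i, j i) ≤ m - 1 → ∀ x ∈ K, f j x = 0)
    {y z : E2} (hy : y ∈ K) (hz : z ∈ K) (hyz : y ≠ z) (x : E2) :
    ENNReal.ofReal |f 0 y - f 0 z| ≤
      shvMax m K f x * (edist x y ^ (m : ℝ) + edist x z ^ (m : ℝ)) := by
  have h := le_shvMax m K f x hy hz hyz
  rw [nn_taylor_orig hf hy hz] at h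
  exact (ENNReal.div_le_iff (den_pos (le_trans one_le_two hm) hyz x) (den_ne_top x y z)).mp h

end Chunk4
section Chunk5

lemma f0_cont {m : ℕ} (hm : 2 ≤ m) {p : ℝ} (hp : 2 < p) {K : Set E2}
    {f : (Fin 2 → ℕ) → E2 → ℝ}
    (hf : ∀ j : Fin 2 → ℕ, 1 ≤ (∑ i, j i) → (∑ i, j i) ≤ m - 1 → ∀ x ∈ K, f j x = 0)
    (hI : ∫⁻ x, shvMax m K f x ^ p ≠ ⊤) :
    ContinuousOn (f 0) K := by
  have hp0 : (0:ℝ) < p := lt_trans two_pos hp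
  have hp0' : p ≠ 0 := ne_of_gt hp0
  have he : (0:ℝ) < (m:ℝ) - 2/p := by
    have h2p : 2/p < 1 := by rw [div_lt_one hp0]; exact hp
    have hm1 : (1:ℝ) ≤ (m:ℝ) := by exact_mod_cast le_trans one_le_two hm
    linarith
  intro y₀ hy₀
  rw [Metric.continuousWithinAt_iff]
  intro η hη
  set Mf := shvMax m K f with hMfdef
  set I := ∫⁻ x, Mf x ^ p with hIdef
  set V₁ := volume (Metric.ball (0:E2) (1:ℝ)) with hV₁def
  have hV₁0 : V₁ ≠ 0 := (measure_ball_pos volume (0:E2) one_pos).ne'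
  have hV₁top : V₁ ≠ ⊤ := measure_ball_lt_top.ne
  set r : ℕ → ℝ := fun k => 1 / ((k:ℝ) + 1) with hrdef
  have hr0 : ∀ k, 0 < r k := fun k => by positivity
  have hgmeas : Measurable fun x => Mf x ^ p :=
    (ENNReal.continuous_rpow_const.measurable).comp (shvMax_measurable hf)
  have hpig : ∀ k : ℕ, ∃ x ∈ Metric.ball y₀ (r k),
      Mf x ^ p ≤ 2 * I / volume (Metric.ball y₀ (r k)) :=
    fun k => exists_le_avg hgmeas hI measurableSet_ball
      (measure_ball_pos volume y₀ (hr0 k)).ne' measure_ball_lt_top.ne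
  choose xk hxkB hxk using hpig
  have hMfxk : ∀ k, Mf (xk k) ≤ (2 * I / volume (Metric.ball y₀ (r k))) ^ (1/p) := by
    intro k
    have h := ENNReal.rpow_le_rpow (hxk k) (by positivity : (0:ℝ) ≤ 1/p)
    rwa [← ENNReal.rpow_mul, mul_one_div_cancel hp0', ENNReal.rpow_one] at h
  set β : ℕ → ℝ≥0∞ := fun k =>
    (2 * I / volume (Metric.ball y₀ (r k))) ^ (1/p) *
      ENNReal.ofReal (2 * (2 * r k) ^ (m:ℝ)) with hβdef
  have hosc : ∀ k, ∀ y ∈ K, dist y y₀ < r k →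
      ENNReal.ofReal |f 0 y - f 0 y₀| ≤ β k := by
    intro k y hy hdy
    rcases eq_or_ne y y₀ with rfl | hne
    · simp
    · have h1 := num_le_mf hm hf hy hy₀ hne (xk k)
      have hxkb : dist (xk k) y₀ < r k := Metric.mem_ball.mp (hxkB k)
      have hedist : ∀ w : E2, dist (xk k) w ≤ 2 * r k →
          edist (xk k) w ^ (m:ℝ) ≤ ENNReal.ofReal ((2 * r k) ^ (m:ℝ)) := by
        intro w hw
        rw [edist_dist]
        calc (ENNReal.ofReal (dist (xk k) w)) ^ (m:ℝ)
            ≤ (ENNReal.ofReal (2 * r k)) ^ (m:ℝ) :=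
              ENNReal.rpow_le_rpow (ENNReal.ofReal_le_ofReal hw) (by positivity)
          _ = ENNReal.ofReal ((2 * r k) ^ (m:ℝ)) :=
              ENNReal.ofReal_rpow_of_pos (by positivity)
      have hd1 : dist (xk k) y ≤ 2 * r k := by
        have ht := dist_triangle (xk k) y₀ y
        have : dist y₀ y = dist y y₀ := dist_comm _ _
        linarith
      have hd2 : dist (xk k) y₀ ≤ 2 * r k := by linarith [(hr0 k)]
      have hden : edist (xk k) y ^ (m:ℝ) + edist (xk k) y₀ ^ (m:ℝ) ≤
          ENNReal.ofReal (2 * (2 * r k) ^ (m:ℝ)) := by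
        have hsum := add_le_add (hedist y hd1) (hedist y₀ hd2)
        have heq : ENNReal.ofReal ((2 * r k) ^ (m:ℝ)) + ENNReal.ofReal ((2 * r k) ^ (m:ℝ))
            = ENNReal.ofReal (2 * (2 * r k) ^ (m:ℝ)) := by
          rw [← ENNReal.ofReal_add (by positivity) (by positivity)]
          ring_nf
        rwa [heq] at hsum
      calc ENNReal.ofReal |f 0 y - f 0 y₀|
          ≤ Mf (xk k) * (edist (xk k) y ^ (m:ℝ) + edist (xk k) y₀ ^ (m:ℝ)) := h1
        _ ≤ (2 * I / volume (Metric.ball y₀ (r k))) ^ (1/p) *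
              ENNReal.ofReal (2 * (2 * r k) ^ (m:ℝ)) := mul_le_mul' (hMfxk k) hden
  set C2 := (2 * I / V₁) ^ (1/p) * ENNReal.ofReal (2 * 2 ^ (m:ℝ)) with hC2def
  have h2I : 2 * I ≠ ⊤ := ENNReal.mul_ne_top (by simp) hI
  have hC2top : C2 ≠ ⊤ := by
    refine ENNReal.mul_ne_top ?_ ENNReal.ofReal_ne_top
    exact (ENNReal.rpow_lt_top_of_nonneg (by positivity) (ENNReal.div_lt_top h2I hV₁0).ne).ne
  have hβeq : ∀ k, β k = C2 * ENNReal.ofReal (r k ^ ((m:ℝ) - 2/p)) := by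
    intro k
    have hrk := hr0 k
    have hball : volume (Metric.ball y₀ (r k)) = ENNReal.ofReal (r k ^ (2:ℕ)) * V₁ := by
      rw [MeasureTheory.Measure.addHaar_ball (volume : Measure E2) y₀ hrk.le, finrank_euclideanSpace_fin]
    set X := ENNReal.ofReal (r k ^ (2:ℕ)) with hXdef
    have hX0 : X ≠ 0 := by
      rw [hXdef, Ne, ENNReal.ofReal_eq_zero, not_le]
      positivity
    have hXtop : X ≠ ⊤ := ENNReal.ofReal_ne_top
    have hi : 2 * I / (X * V₁) = (2 * I / V₁) * X⁻¹ := by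
      rw [div_eq_mul_inv, ENNReal.mul_inv (Or.inl hX0) (Or.inl hXtop), div_eq_mul_inv]
      ring
    have hii : (2 * I / (X * V₁)) ^ (1/p) = (2 * I / V₁) ^ (1/p) * (X ^ (1/p))⁻¹ := by
      rw [hi, ENNReal.mul_rpow_of_nonneg _ _ (by positivity), ENNReal.inv_rpow]
    have hX13 : X ^ (1/p) = ENNReal.ofReal (r k ^ (2/p)) := by
      rw [hXdef, ← Real.rpow_natCast (r k) 2, ENNReal.ofReal_rpow_of_pos (by positivity),
        ← Real.rpow_mul hrk.le]
      norm_num [div_eq_mul_inv]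
    have hnum : ENNReal.ofReal (2 * (2 * r k) ^ (m:ℝ)) =
        ENNReal.ofReal (2 * 2 ^ (m:ℝ)) * ENNReal.ofReal (r k ^ (m:ℝ)) := by
      rw [← ENNReal.ofReal_mul (by positivity)]
      congr 1
      rw [Real.mul_rpow (by norm_num) hrk.le]
      ring
    have hlast : (ENNReal.ofReal (r k ^ (2/p)))⁻¹ * ENNReal.ofReal (r k ^ (m:ℝ)) =
        ENNReal.ofReal (r k ^ ((m:ℝ) - 2/p)) := by
      have hsub : r k ^ ((m:ℝ) - 2/p) = r k ^ (m:ℝ) / r k ^ (2/p) := Real.rpow_sub hrk _ _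
      rw [hsub, ENNReal.ofReal_div_of_pos (by positivity), ENNReal.div_eq_inv_mul]
    calc β k = (2 * I / (X * V₁)) ^ (1/p) * ENNReal.ofReal (2 * (2 * r k) ^ (m:ℝ)) := by
          simp only [hβdef]
          rw [hball]
      _ = (2 * I / V₁) ^ (1/p) * (ENNReal.ofReal (r k ^ (2/p)))⁻¹ *
            (ENNReal.ofReal (2 * 2 ^ (m:ℝ)) * ENNReal.ofReal (r k ^ (m:ℝ))) := by
          rw [hii, hX13, hnum]
      _ = C2 * ((ENNReal.ofReal (r k ^ (2/p)))⁻¹ * ENNReal.ofReal (r k ^ (m:ℝ))) := by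
          rw [hC2def]; ring
      _ = C2 * ENNReal.ofReal (r k ^ ((m:ℝ) - 2/p)) := by rw [hlast]
  have hof : Tendsto (fun k => ENNReal.ofReal (r k ^ ((m:ℝ) - 2/p))) atTop (𝓝 0) := by
    have h1 : Tendsto r atTop (𝓝 0) := tendsto_one_div_add_atTop_nhds_zero_nat
    have h2 : Tendsto (fun k => r k ^ ((m:ℝ) - 2/p)) atTop (𝓝 ((0:ℝ) ^ ((m:ℝ) - 2/p))) :=
      h1.rpow_const (Or.inr he.le)
    rw [Real.zero_rpow he.ne'] at h2
    simpa using ENNReal.tendsto_ofReal h2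
  have hβ0 : Tendsto β atTop (𝓝 0) := by
    have h := ENNReal.Tendsto.const_mul hof (Or.inr hC2top)
    rw [mul_zero] at h
    exact Tendsto.congr (fun k => (hβeq k).symm) h
  have hev := (ENNReal.tendsto_nhds_zero.mp hβ0) (ENNReal.ofReal (η/2))
    (ENNReal.ofReal_pos.mpr (by linarith))
  obtain ⟨k, hk⟩ := hev.exists
  refine ⟨r k, hr0 k, ?_⟩
  intro y hy hdy
  have hfin := le_trans (hosc k y hy hdy) hk
  rw [ENNReal.ofReal_le_ofReal_iff (by linarith)] at hfin
  rw [Real.dist_eq]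
  linarith
end Chunk5
section Chunk6

lemma const_on_of_null {K : Set E2} {f0 : E2 → ℝ} (hμ : volume (f0 '' K) = 0)
    (hcont : ContinuousOn f0 K) {C : Set E2} (hC : IsPreconnected C) (hCK : C ⊆ K) :
    ∀ y ∈ C, ∀ z ∈ C, f0 y = f0 z := by
  have key : ∀ u v : E2, u ∈ C → v ∈ C → f0 u ≤ f0 v → f0 u = f0 v := by
    intro u v hu hv huv
    by_contra hne
    have hlt : f0 u < f0 v := lt_of_le_of_ne huv hne
    have himg : IsPreconnected (f0 '' C) := hC.image _ (hcont.mono hCK)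
    have hOC : Set.OrdConnected (f0 '' C) := himg.ordConnected
    have hsub : Set.Icc (f0 u) (f0 v) ⊆ f0 '' C :=
      hOC.out (Set.mem_image_of_mem _ hu) (Set.mem_image_of_mem _ hv)
    have hnull : volume (Set.Icc (f0 u) (f0 v)) = 0 :=
      measure_mono_null (hsub.trans (Set.image_mono hCK)) hμ
    rw [Real.volume_Icc, ENNReal.ofReal_eq_zero] at hnull
    linarith
  intro y hy z hz
  rcases le_total (f0 y) (f0 z) with h | h
  · exact key y z hy hz h
  · exact (key z y hz hy h).symm

lemma isolation {K : Set E2} {x : E2} (hx : x ∈ K) (hxS : x ∉ singSet K) :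
    ∃ r > 0, ∀ y ∈ K, dist y x < r → y ∈ connectedComponentIn K x := by
  by_contra hcon
  push_neg at hcon
  have hseq : ∀ k : ℕ, ∃ y, y ∈ K ∧ dist y x < 1/((k:ℝ)+1) ∧
      y ∉ connectedComponentIn K x := by
    intro k
    obtain ⟨y, hyK, hyd, hyc⟩ := hcon (1/((k:ℝ)+1)) (by positivity)
    exact ⟨y, hyK, hyd, hyc⟩
  choose w hwK hwd hwc using hseq
  refine hxS ⟨hx, w, hwK, ?_, ?_⟩
  · have h0 : Tendsto (fun k : ℕ => dist (w k) x) atTop (𝓝 0) :=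
      squeeze_zero (fun k => dist_nonneg) (fun k => (hwd k).le)
        tendsto_one_div_add_atTop_nhds_zero_nat
    exact tendsto_iff_dist_tendsto_zero.mpr h0
  · intro k heq
    exact hwc k (heq ▸ mem_connectedComponentIn (hwK k))

def constRadSet (K : Set E2) (g : E2 → ℝ) (x : E2) : Set ℝ :=
  {r : ℝ | r ∈ Set.Ioc (0:ℝ) 1 ∧
    ∀ y ∈ K ∩ Metric.ball x r, ∀ z ∈ K ∩ Metric.ball x r, g y = g z}

def constRad (K : Set E2) (g : E2 → ℝ) (x : E2) : ℝ := sSup (constRadSet K g x)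

lemma constRadSet_bdd (K : Set E2) (g : E2 → ℝ) (x : E2) : BddAbove (constRadSet K g x) :=
  bddAbove_Ioc.mono (fun _ hr => hr.1)

lemma constRad_nonneg (K : Set E2) (g : E2 → ℝ) (x : E2) : 0 ≤ constRad K g x :=
  Real.sSup_nonneg (fun _ hr => hr.1.1.le)

lemma measurable_constRad (K : Set E2) (g : E2 → ℝ) : Measurable (constRad K g) := by
  apply measurable_of_Ioi
  intro a
  rcases lt_or_ge a 0 with ha | ha
  · have heq : constRad K g ⁻¹' (Set.Ioi a) = Set.univ :=
      Set.eq_univ_of_forall (fun x => lt_of_lt_of_le ha (constRad_nonneg K g x))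
    rw [heq]; exact MeasurableSet.univ
  · have heq : constRad K g ⁻¹' (Set.Ioi a) =
        ⋃ (q : ℚ) (_ : a < (q:ℝ) ∧ (q:ℝ) ≤ 1),
          {x : E2 | ∀ y ∈ K ∩ Metric.ball x (q:ℝ), ∀ z ∈ K ∩ Metric.ball x (q:ℝ),
            g y = g z} := by
      ext x
      simp only [Set.mem_preimage, Set.mem_Ioi, Set.mem_iUnion, Set.mem_setOf_eq]
      constructor
      · intro hax
        have hne : (constRadSet K g x).Nonempty := by
          by_contra hempty
          rw [Set.not_nonempty_iff_eq_empty] at hempty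
          have : constRad K g x = 0 := by rw [constRad, hempty, Real.sSup_empty]
          rw [this] at hax
          exact absurd hax (not_lt.mpr ha)
        obtain ⟨s, hs, has⟩ := exists_lt_of_lt_csSup hne hax
        obtain ⟨q, hq1, hq2⟩ := exists_rat_btwn has
        refine ⟨q, ⟨hq1, le_trans hq2.le hs.1.2⟩, ?_⟩
        intro y hy z hz
        exact hs.2 y ⟨hy.1, Metric.ball_subset_ball hq2.le hy.2⟩
          z ⟨hz.1, Metric.ball_subset_ball hq2.le hz.2⟩
      · rintro ⟨q, ⟨haq, hq1⟩, hq⟩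
        have hmem : (q:ℝ) ∈ constRadSet K g x := ⟨⟨lt_of_le_of_lt ha haq, hq1⟩, hq⟩
        exact lt_of_lt_of_le haq (le_csSup (constRadSet_bdd K g x) hmem)
    rw [heq]
    refine MeasurableSet.iUnion fun q => MeasurableSet.iUnion fun _ => ?_
    refine IsClosed.measurableSet ?_
    rw [← isOpen_compl_iff, Metric.isOpen_iff]
    intro x hx
    simp only [Set.mem_compl_iff, Set.mem_setOf_eq] at hx
    push_neg at hx
    obtain ⟨y, hy, z, hz, hgyz⟩ := hx
    have hdy : dist y x < (q:ℝ) := hy.2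
    have hdz : dist z x < (q:ℝ) := hz.2
    refine ⟨min ((q:ℝ) - dist y x) ((q:ℝ) - dist z x), lt_min (by linarith) (by linarith), ?_⟩
    intro x' hx'
    have hdxx' : dist x' x < min ((q:ℝ) - dist y x) ((q:ℝ) - dist z x) := hx'
    simp only [Set.mem_compl_iff, Set.mem_setOf_eq]
    push_neg
    refine ⟨y, ⟨hy.1, ?_⟩, z, ⟨hz.1, ?_⟩, hgyz⟩
    · have h1 : dist y x' ≤ dist y x + dist x x' := dist_triangle y x x'
      have h2 : dist x x' = dist x' x := dist_comm _ _
      have h3 : dist x' x < (q:ℝ) - dist y x := lt_of_lt_of_le hdxx' (min_le_left _ _)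
      exact Metric.mem_ball.mpr (by linarith)
    · have h1 : dist z x' ≤ dist z x + dist x x' := dist_triangle z x x'
      have h2 : dist x x' = dist x' x := dist_comm _ _
      have h3 : dist x' x < (q:ℝ) - dist z x := lt_of_lt_of_le hdxx' (min_le_right _ _)
      exact Metric.mem_ball.mpr (by linarith)

lemma constRad_pos_of_notin {K : Set E2} (hK : IsClosed K) (g : E2 → ℝ) {x : E2}
    (hx : x ∉ K) : 0 < constRad K g x := by
  obtain ⟨r, hr, hball⟩ := Metric.isOpen_iff.mp hK.isOpen_compl x hx
  have hmem : min r 1 ∈ constRadSet K g x := by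
    refine ⟨⟨lt_min hr one_pos, min_le_right _ _⟩, ?_⟩
    intro y hy
    exact absurd hy.1 (hball (Metric.ball_subset_ball (min_le_left _ _) hy.2))
  exact lt_of_lt_of_le (lt_min hr one_pos) (le_csSup (constRadSet_bdd K g x) hmem)

lemma constRad_pos_of_mem {K : Set E2} {f0 : E2 → ℝ} (hμ : volume (f0 '' K) = 0)
    (hcont : ContinuousOn f0 K) {x : E2} (hx : x ∈ K) (hxS : x ∉ singSet K) :
    0 < constRad K f0 x := by
  obtain ⟨r, hr, hiso⟩ := isolation hx hxS
  have hmem : min r 1 ∈ constRadSet K f0 x := by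
    refine ⟨⟨lt_min hr one_pos, min_le_right _ _⟩, ?_⟩
    intro y hy z hz
    have hyC : y ∈ connectedComponentIn K x :=
      hiso y hy.1 (lt_of_lt_of_le hy.2 (min_le_left _ _))
    have hzC : z ∈ connectedComponentIn K x :=
      hiso z hz.1 (lt_of_lt_of_le hz.2 (min_le_left _ _))
    exact const_on_of_null hμ hcont isPreconnected_connectedComponentIn
      (connectedComponentIn_subset K x) y hyC z hzC
  exact lt_of_lt_of_le (lt_min hr one_pos) (le_csSup (constRadSet_bdd K f0 x) hmem)

lemma constRad_pos_ae {K : Set E2} (hK : IsClosed K) (hS : volume (singSet K) = 0)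
    {f0 : E2 → ℝ} (hμ : volume (f0 '' K) = 0) (hcont : ContinuousOn f0 K) :
    ∀ᵐ x, 0 < constRad K f0 x := by
  rw [MeasureTheory.ae_iff]
  refine measure_mono_null ?_ hS
  intro x hx
  simp only [Set.mem_setOf_eq, not_lt] at hx
  by_contra hxS
  rcases em (x ∈ K) with hxK | hxK
  · exact absurd hx (not_le.mpr (constRad_pos_of_mem hμ hcont hxK hxS))
  · exact absurd hx (not_le.mpr (constRad_pos_of_notin hK f0 hxK))

end Chunk6
section Chunk7

lemma shv_eta_le_shv {m : ℕ} {K : Set E2} {f : (Fin 2 → ℕ) → E2 → ℝ}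
    (hf : ∀ j : Fin 2 → ℕ, 1 ≤ (∑ i, j i) → (∑ i, j i) ≤ m - 1 → ∀ x ∈ K, f j x = 0)
    {A : Set ℝ} (hA : MeasurableSet A) (x : E2) :
    shvMax m K (fun j x => if j = 0 then etaComp A (f 0 x) else 0) x ≤ shvMax m K f x := by
  refine shvMax_le fun y hy z hz hyz => ?_
  rw [nn_taylor_eta]
  refine le_trans ?_ (le_shvMax m K f x hy hz hyz)
  rw [nn_taylor_orig hf hy hz]
  exact ENNReal.div_le_div (ENNReal.ofReal_le_ofReal (eta_lip A hA _ _)) le_rfl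

lemma shv_eta_le_psi {m : ℕ} (hm : 2 ≤ m) {K : Set E2} {f : (Fin 2 → ℕ) → E2 → ℝ}
    (hf : ∀ j : Fin 2 → ℕ, 1 ≤ (∑ i, j i) → (∑ i, j i) ≤ m - 1 → ∀ x ∈ K, f j x = 0)
    {ε : ℝ} (hε : 0 < ε) {A : Set ℝ} (hA : MeasurableSet A)
    (hvolA : volume A ≤ ENNReal.ofReal ε) (x : E2) :
    shvMax m K (fun j x => if j = 0 then etaComp A (f 0 x) else 0) x ≤
      min (shvMax m K f x)
        (ENNReal.ofReal ε / ENNReal.ofReal (constRad K (f 0) x / 2) ^ (m:ℝ)) := by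
  refine le_min (shv_eta_le_shv hf hA x) ?_
  refine shvMax_le fun y hy z hz hyz => ?_
  rw [nn_taylor_eta]
  set R := constRad K (f 0) x with hR
  rcases le_or_gt R 0 with hR0 | hR0
  · have h0 : ENNReal.ofReal (R/2) = 0 := by
      rw [ENNReal.ofReal_eq_zero]; linarith
    rw [h0, ENNReal.zero_rpow_of_pos (by positivity), ENNReal.div_zero (by
      rw [Ne, ENNReal.ofReal_eq_zero, not_le]; exact hε)]
    exact le_top
  · have hne : (constRadSet K (f 0) x).Nonempty := by
      by_contra hempty
      rw [Set.not_nonempty_iff_eq_empty] at hempty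
      have h0 : R = 0 := by rw [hR, constRad, hempty, Real.sSup_empty]
      linarith
    have hhalf : R / 2 < sSup (constRadSet K (f 0) x) := by
      have hRR : sSup (constRadSet K (f 0) x) = R := rfl
      rw [hRR]; linarith
    obtain ⟨s, hs, hRs⟩ := exists_lt_of_lt_csSup hne hhalf
    by_cases hfar : dist y x < s ∧ dist z x < s
    · have heq : f 0 y = f 0 z := hs.2 y ⟨hy, hfar.1⟩ z ⟨hz, hfar.2⟩
      rw [heq]
      simp
    · have hnum : ENNReal.ofReal |etaComp A (f 0 y) - etaComp A (f 0 z)| ≤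
          ENNReal.ofReal ε := by
        refine ENNReal.ofReal_le_ofReal ?_
        refine le_trans (eta_osc A hA (lt_of_le_of_lt hvolA ENNReal.ofReal_lt_top).ne _ _) ?_
        have h := ENNReal.toReal_mono ENNReal.ofReal_ne_top hvolA
        rwa [ENNReal.toReal_ofReal hε.le] at h
      have hbase : ∀ w : E2, ¬ dist w x < s →
          ENNReal.ofReal (R/2) ^ (m:ℝ) ≤ edist x w ^ (m:ℝ) := by
        intro w hw
        refine ENNReal.rpow_le_rpow ?_ (by positivity)
        rw [edist_dist, dist_comm]
        refine ENNReal.ofReal_le_ofReal ?_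
        have := not_lt.mp hw
        linarith
      have hden : ENNReal.ofReal (R/2) ^ (m:ℝ) ≤
          edist x y ^ (m:ℝ) + edist x z ^ (m:ℝ) := by
        rcases not_and_or.mp hfar with hfy | hfz
        · exact le_trans (hbase y hfy) le_self_add
        · exact le_trans (hbase z hfz) le_add_self
      exact ENNReal.div_le_div hnum hden

end Chunk7
/-- **Monotone compression for Sobolev spaces, `p > 2`** (Proposition 5.5). Let `K ⊂ ℝ²`
be compact with `|S(K)| = 0`, and let `f` be a jet of order `m-1` on `K` with
`f^{(j)} = 0` for `1 ≤ |j| ≤ m-1` and `‖M^{(m)} f‖_{L^p} < ∞`. Then the compressed jets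
`f_ε = {η_ε ∘ f^{(0)}, 0, …, 0}`, built from any finite family of disjoint open intervals
covering `f^{(0)}(K)` with total length `< ε`, satisfy `‖M^{(m)} f_ε‖_{L^p} ≤ δ(ε)` with
`δ(ε) → 0` as `ε → 0⁺`. -/
theorem monotone_compression_sobolev
    (m : ℕ) (hm : 2 ≤ m) (p : ℝ) (hp : 2 < p)
    (K : Set E2) (hK : IsCompact K) (hS : volume (singSet K) = 0)
    (f : (Fin 2 → ℕ) → E2 → ℝ)
    (hf : ∀ j : Fin 2 → ℕ, 1 ≤ (∑ i, j i) → (∑ i, j i) ≤ m - 1 → ∀ x ∈ K, f j x = 0)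
    (hMf : lpNormE (shvMax m K f) p < ⊤) :
    ∃ δ : ℝ → ℝ, Tendsto δ (𝓝[>] (0 : ℝ)) (𝓝 0) ∧
      ∀ ε : ℝ, 0 < ε → ∀ (N : ℕ) (a b : Fin N → ℝ) (A : Set ℝ),
        IntervalFamily N a b A → (f 0) '' K ⊆ A → (∑ i, (b i - a i)) < ε →
        lpNormE (shvMax m K (fun j x => if j = 0 then etaComp A (f 0 x) else 0)) p ≤
          ENNReal.ofReal (δ ε) := by
  have hp0 : (0:ℝ) < p := lt_trans two_pos hp
  have hp0' : p ≠ 0 := ne_of_gt hp0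
  have hIlt : ∫⁻ x, shvMax m K f x ^ p ≠ ⊤ := lint_lt_top hp0 hMf
  have hAmeas : ∀ (N : ℕ) (a b : Fin N → ℝ) (A : Set ℝ), IntervalFamily N a b A →
      MeasurableSet A := by
    intro N a b A hfam
    rw [hfam.1]
    exact (isOpen_iUnion fun i => isOpen_Ioo).measurableSet
  have hvolA : ∀ {ε : ℝ} (N : ℕ) (a b : Fin N → ℝ) (A : Set ℝ), IntervalFamily N a b A →
      (∑ i, (b i - a i)) < ε → volume A ≤ ENNReal.ofReal ε := by
    intro ε N a b A hfam hsum
    exact le_trans (volA_le hfam) (ENNReal.ofReal_le_ofReal hsum.le)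
  rcases eq_or_ne (volume (f 0 '' K)) 0 with hμ | hμ
  · -- image of measure zero: the main case
    have hcont : ContinuousOn (f 0) K := f0_cont hm hp hf hIlt
    set Mf := shvMax m K f with hMfdef
    set R := constRad K (f 0) with hRdef
    set Ψ : ℝ → E2 → ℝ≥0∞ := fun ε x =>
      min (Mf x) (ENNReal.ofReal ε / ENNReal.ofReal (R x / 2) ^ (m:ℝ)) with hΨdef
    have hΨmeas : ∀ ε, Measurable (fun x => Ψ ε x ^ p) := by
      intro ε
      refine (ENNReal.continuous_rpow_const.measurable).comp ?_
      refine Measurable.min (shvMax_measurable hf) ?_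
      refine Measurable.div measurable_const ?_
      refine (ENNReal.continuous_rpow_const.measurable).comp ?_
      exact ENNReal.measurable_ofReal.comp ((measurable_constRad K (f 0)).div_const 2)
    set J : ℝ → ℝ≥0∞ := fun ε => ∫⁻ x, Ψ ε x ^ p with hJdef
    have hJle : ∀ ε, J ε ≤ ∫⁻ x, Mf x ^ p := fun ε =>
      MeasureTheory.lintegral_mono fun x => ENNReal.rpow_le_rpow (min_le_left _ _) hp0.le
    have hJtop : ∀ ε, J ε ≠ ⊤ := fun ε =>
      (lt_of_le_of_lt (hJle ε) (lt_top_iff_ne_top.mpr hIlt)).ne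
    have hJmono : ∀ {ε₁ ε₂ : ℝ}, ε₁ ≤ ε₂ → J ε₁ ≤ J ε₂ := by
      intro ε₁ ε₂ h
      refine MeasureTheory.lintegral_mono fun x => ENNReal.rpow_le_rpow ?_ hp0.le
      exact min_le_min le_rfl (ENNReal.div_le_div (ENNReal.ofReal_le_ofReal h) le_rfl)
    have hseq : Tendsto (fun k : ℕ => J (1/((k:ℝ)+1))) atTop (𝓝 0) := by
      have hdct := MeasureTheory.tendsto_lintegral_of_dominated_convergence
        (μ := (volume : Measure E2))
        (F := fun (k : ℕ) (x : E2) => Ψ (1/((k:ℝ)+1)) x ^ p) (f := fun _ => 0)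
        (bound := fun x => Mf x ^ p)
        (fun k => hΨmeas _)
        (fun k => Filter.Eventually.of_forall fun x =>
          ENNReal.rpow_le_rpow (min_le_left _ _) hp0.le)
        hIlt ?_
      · rw [MeasureTheory.lintegral_zero] at hdct
        exact hdct
      · filter_upwards [constRad_pos_ae hK.isClosed hS hμ hcont] with x hRx
        have hc0 : ENNReal.ofReal (R x / 2) ^ (m:ℝ) ≠ 0 := by
          refine (ENNReal.rpow_pos ?_ ENNReal.ofReal_ne_top).ne'
          rw [ENNReal.ofReal_pos]
          linarith
        have hdiv : Tendsto (fun k : ℕ =>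
            ENNReal.ofReal (1/((k:ℝ)+1)) / ENNReal.ofReal (R x / 2) ^ (m:ℝ))
            atTop (𝓝 0) := by
          simp only [div_eq_mul_inv]
          have h1 : Tendsto (fun k : ℕ => ENNReal.ofReal (1/((k:ℝ)+1))) atTop (𝓝 0) := by
            have := ENNReal.tendsto_ofReal tendsto_one_div_add_atTop_nhds_zero_nat
            simpa using this
          have h2 := ENNReal.Tendsto.mul_const h1
            (Or.inr (ENNReal.inv_ne_top.mpr hc0))
          rwa [zero_mul] at h2
        have hΨ0 : Tendsto (fun k : ℕ => Ψ (1/((k:ℝ)+1)) x) atTop (𝓝 0) := by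
          refine tendsto_of_tendsto_of_tendsto_of_le_of_le tendsto_const_nhds hdiv
            (fun k => zero_le) (fun k => min_le_right _ _)
        have hcomp := (ENNReal.continuous_rpow_const (y := p)).tendsto 0
        have := hcomp.comp hΨ0
        rwa [ENNReal.zero_rpow_of_pos hp0] at this
    refine ⟨fun ε => (J ε ^ (1/p)).toReal, ?_, ?_⟩
    · rw [Metric.tendsto_nhds]
      intro η hη
      have hpow_pos : (0:ℝ≥0∞) < ENNReal.ofReal (η/2) ^ p :=
        ENNReal.rpow_pos (ENNReal.ofReal_pos.mpr (by linarith)) ENNReal.ofReal_ne_top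
      obtain ⟨k, hk⟩ := (ENNReal.tendsto_nhds_zero.mp hseq _ hpow_pos).exists
      have hmem : Set.Ioo (0:ℝ) (1/((k:ℝ)+1)) ∈ 𝓝[>] (0:ℝ) :=
        Ioo_mem_nhdsGT (by positivity)
      refine Filter.eventually_of_mem hmem ?_
      intro ε hε
      have hJε : J ε ≤ ENNReal.ofReal (η/2) ^ p := le_trans (hJmono hε.2.le) hk
      have hroot : J ε ^ (1/p) ≤ ENNReal.ofReal (η/2) := by
        have h := ENNReal.rpow_le_rpow hJε (by positivity : (0:ℝ) ≤ 1/p)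
        rwa [← ENNReal.rpow_mul, mul_one_div_cancel hp0', ENNReal.rpow_one] at h
      have htoReal : (J ε ^ (1/p)).toReal ≤ η/2 := by
        have h := ENNReal.toReal_mono ENNReal.ofReal_ne_top hroot
        rwa [ENNReal.toReal_ofReal (by linarith)] at h
      have hnonneg : 0 ≤ (J ε ^ (1/p)).toReal := ENNReal.toReal_nonneg
      rw [Real.dist_eq, sub_zero, abs_of_nonneg hnonneg]
      linarith
    · intro ε hε N a b A hfam hcov hsum
      have hA := hAmeas N a b A hfam
      have hvA := hvolA N a b A hfam hsum
      have hpt : ∀ x, shvMax m K (fun j x => if j = 0 then etaComp A (f 0 x) else 0) x ≤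
          Ψ ε x := fun x => shv_eta_le_psi hm hf hε hA hvA x
      have hint : lpNormE (shvMax m K (fun j x => if j = 0 then etaComp A (f 0 x) else 0)) p ≤
          J ε ^ (1/p) := by
        unfold lpNormE
        refine ENNReal.rpow_le_rpow ?_ (by positivity)
        exact MeasureTheory.lintegral_mono fun x =>
          ENNReal.rpow_le_rpow (hpt x) hp0.le
      have hne : J ε ^ (1/p) ≠ ⊤ :=
        (ENNReal.rpow_lt_top_of_nonneg (by positivity) (hJtop ε)).ne
      rwa [ENNReal.ofReal_toReal hne]
  · -- image of positive measure: vacuous for small ε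
    set L := lpNormE (shvMax m K f) p with hLdef
    refine ⟨fun ε => if ENNReal.ofReal ε < volume (f 0 '' K) then 0 else L.toReal, ?_, ?_⟩
    · have hev : ∀ᶠ ε in 𝓝[>] (0:ℝ),
          (if ENNReal.ofReal ε < volume (f 0 '' K) then (0:ℝ) else L.toReal) = 0 := by
        rcases eq_or_ne (volume (f 0 '' K)) ⊤ with htop | htop
        · refine Filter.Eventually.of_forall fun ε => ?_
          rw [if_pos (htop ▸ ENNReal.ofReal_lt_top)]
        · have hpos : 0 < (volume (f 0 '' K)).toReal := ENNReal.toReal_pos hμ htop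
          have hmem : Set.Ioo (0:ℝ) ((volume (f 0 '' K)).toReal) ∈ 𝓝[>] (0:ℝ) :=
            Ioo_mem_nhdsGT hpos
          refine Filter.eventually_of_mem hmem ?_
          intro ε hε
          rw [if_pos ((ENNReal.ofReal_lt_iff_lt_toReal hε.1.le htop).mpr hε.2)]
      exact Filter.Tendsto.congr' (Filter.EventuallyEq.symm hev) tendsto_const_nhds
    · intro ε hε N a b A hfam hcov hsum
      have hA := hAmeas N a b A hfam
      have hvA := hvolA N a b A hfam hsum
      by_cases hlt : ENNReal.ofReal ε < volume (f 0 '' K)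
      · exfalso
        have : volume (f 0 '' K) ≤ ENNReal.ofReal ε := le_trans (measure_mono hcov) hvA
        exact absurd hlt (not_lt.mpr this)
      · have hδ : (fun ε => if ENNReal.ofReal ε < volume (f 0 '' K) then (0:ℝ)
            else L.toReal) ε = L.toReal := if_neg hlt
        rw [hδ, ENNReal.ofReal_toReal hMf.ne]
        unfold lpNormE
        refine ENNReal.rpow_le_rpow ?_ (by positivity)
        exact MeasureTheory.lintegral_mono fun x =>
          ENNReal.rpow_le_rpow (shv_eta_le_shv hf hA x) hp0.le

end DFA
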